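/- Let H = span{f_n : n ∈ ℕ} with [f_n,f_m] = ε_n δ_{nm}, ε_n ∈ {+1,−1}, both signs occurring at least once. Let W f_n = μ_n f_n with μ_n ≠ 0. If W maps F₊₊ = {f : [f,f] > 0} onto itself bijectively, then all |μ_n| are equal: there exists c > 0 with |μ_n| = c for all n. -/

import Mathlib

/-- if a diagonal operator W fₙ = μₙ fₙ (μₙ ≠ 0) on the span of an orthonormal
sequence for an indefinite Hermitian form (both signs occurring) maps the positive vectors
bijectively onto themselves, then all |μₙ| coincide. -/
theorem diagonal_bijective_on_positive_implies_constant_modulus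
    (H : Type*) [AddCommGroup H] [Module ℂ H]
    (B : H →ₗ⋆[ℂ] H →ₗ[ℂ] ℂ) (hB : B.IsSymm)
    (f : ℕ → H) (ε : ℕ → ℝ)
    (hspan : Submodule.span ℂ (Set.range f) = ⊤)
    (horth : ∀ n m : ℕ, n ≠ m → B (f n) (f m) = 0)
    (hnorm : ∀ n : ℕ, B (f n) (f n) = (ε n : ℂ))
    (hsign : ∀ n : ℕ, ε n = 1 ∨ ε n = -1)
    (hplus : ∃ n, ε n = 1) (hminus : ∃ n, ε n = -1)
    (W : H →ₗ[ℂ] H) (μ : ℕ → ℂ) (hμ : ∀ n, μ n ≠ 0)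
    (hW : ∀ n, W (f n) = μ n • f n)
    (hbij : Set.BijOn W {v : H | 0 < (B v v).re} {v : H | 0 < (B v v).re}) :
    ∃ c > (0 : ℝ), ∀ n, ‖μ n‖ = c := by
  set r : ℕ → ℝ := fun n => ‖μ n‖ with hrdef
  have hr0 : ∀ n, 0 < r n := fun n => norm_pos_iff.mpr (hμ n)
  -- two-vector norm formula
  have htwo : ∀ (p m : ℕ), p ≠ m → ∀ α β : ℂ,
      (B (α • f p + β • f m) (α • f p + β • f m)).re
        = ‖α‖ ^ 2 * ε p + ‖β‖ ^ 2 * ε m := by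
    intro p m hpm α β
    have h1 := horth p m hpm
    have h2 := horth m p hpm.symm
    have : B (α • f p + β • f m) (α • f p + β • f m)
        = (starRingEnd ℂ α) * α * (ε p : ℂ) + (starRingEnd ℂ β) * β * (ε m : ℂ) := by
      simp [map_add, LinearMap.map_smulₛₗ, h1, h2, hnorm, smul_eq_mul]
      ring
    rw [this]
    have hα : (starRingEnd ℂ α) * α = ((‖α‖ ^ 2 : ℝ) : ℂ) := by
      rw [Complex.sq_norm]
      exact (Complex.normSq_eq_conj_mul_self).symm
    have hβ : (starRingEnd ℂ β) * β = ((‖β‖ ^ 2 : ℝ) : ℂ) := by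
      rw [Complex.sq_norm]
      exact (Complex.normSq_eq_conj_mul_self).symm
    rw [hα, hβ]
    simp [← Complex.ofReal_pow]
  -- coordinate functional formula
  have hcoord : ∀ (n : ℕ) (x : H), B (f n) x = 0 → True := fun _ _ _ => trivial
  -- separation
  have hsep : ∀ x : H, (∀ n, B (f n) x = 0) → x = 0 := by
    intro x hx
    have hx' : x ∈ Submodule.span ℂ (Set.range f) := by rw [hspan]; trivial
    obtain ⟨c, hc⟩ := Finsupp.mem_span_range_iff_exists_finsupp.mp hx'
    have hcn : ∀ n, c n = 0 := by
      intro n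
      have : B (f n) x = c n * (ε n : ℂ) := by
        rw [← hc, map_finsuppSum]
        rw [Finsupp.sum_eq_single n]
        · simp [hnorm]
        · intro i _ hin
          simp [horth n i (Ne.symm hin)]
        · simp
      rw [hx n] at this
      have hεn : (ε n : ℂ) ≠ 0 := by
        rcases hsign n with h | h <;> simp [h]
      have := this.symm
      rcases mul_eq_zero.mp this with h | h
      · exact h
      · exact absurd h hεn
    have : c = 0 := Finsupp.ext hcn
    rw [← hc, this, Finsupp.sum_zero_index]
  -- diagonal action on coordinates
  have hdiag : ∀ (n : ℕ) (x : H), B (f n) (W x) = μ n * B (f n) x := by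
    intro n x
    have hx' : x ∈ Submodule.span ℂ (Set.range f) := by rw [hspan]; trivial
    induction hx' using Submodule.span_induction with
    | mem y hy =>
        obtain ⟨i, rfl⟩ := hy
        rw [hW i, map_smul]
        rcases eq_or_ne i n with rfl | hin
        · simp [smul_eq_mul]
        · simp [horth n i hin.symm]
    | zero => simp
    | add y z _ _ hy hz =>
        simp only [map_add, hy, hz]; ring
    | smul a y _ hy =>
        simp only [map_smul, hy, smul_eq_mul]; ring
  -- injectivity of W
  have hinj : Function.Injective W := by
    intro x y hxy
    have : x - y = 0 := by
      apply hsep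
      intro n
      have h0 : B (f n) (W (x - y)) = 0 := by
        rw [map_sub, map_sub, hxy, sub_self]
      rw [hdiag n (x - y)] at h0
      rcases mul_eq_zero.mp h0 with h | h
      · exact absurd h (hμ n)
      · exact h
    exact sub_eq_zero.mp this
  -- key claim
  have key : ∀ p m : ℕ, ε p = 1 → ε m = -1 → r p = r m := by
    intro p m hp hm
    have hpm : p ≠ m := by
      intro h; rw [h, hm] at hp; norm_num at hp
    have h1 : r m ≤ r p := by
      by_contra h
      push_neg at h
      set t := r m / r p with htdef
      have ht : 1 < t := (one_lt_div (hr0 p)).mpr h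
      set a := Real.sqrt ((1 + t ^ 2) / 2) with hadef
      have ha2 : a ^ 2 = (1 + t ^ 2) / 2 := Real.sq_sqrt (by nlinarith)
      have ha1 : 1 < a ^ 2 := by nlinarith
      have hat : a ^ 2 < t ^ 2 := by nlinarith
      have hrm : r m = t * r p := (div_mul_cancel₀ (r m) (hr0 p).ne').symm
      have habs : ‖(a : ℂ)‖ = a := by
        rw [Complex.norm_of_nonneg (Real.sqrt_nonneg _)]
      set v := (a : ℂ) • f p + (1 : ℂ) • f m with hvdef
      have hv : v ∈ {v : H | 0 < (B v v).re} := by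
        show 0 < (B v v).re
        rw [hvdef, htwo p m hpm, habs, hp, hm]
        simp only [norm_one]
        nlinarith
      have hWv := hbij.mapsTo hv
      have hWveq : W v = ((a : ℂ) * μ p) • f p + (μ m) • f m := by
        rw [hvdef, map_add, map_smul, map_smul, hW, hW, smul_smul, smul_smul, one_mul]
      have hab : ‖(a : ℂ) * μ p‖ = a * r p := by
        rw [norm_mul, habs]
      have hWv' : 0 < (B (W v) (W v)).re := hWv
      rw [hWveq, htwo p m hpm, hab, hp, hm] at hWv'
      have hcm : ‖μ m‖ = r m := rfl
      rw [hcm, hrm] at hWv'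
      nlinarith [hr0 p, hr0 m, mul_lt_mul_of_pos_right hat (pow_pos (hr0 p) 2)]
    have h2 : r p ≤ r m := by
      by_contra h
      push_neg at h
      set s := r p / r m with hsdef
      have hs : 1 < s := (one_lt_div (hr0 m)).mpr h
      set a := Real.sqrt ((1 + s ^ 2) / 2) with hadef
      have ha2 : a ^ 2 = (1 + s ^ 2) / 2 := Real.sq_sqrt (by nlinarith)
      have ha1 : 1 < a ^ 2 := by nlinarith
      have has : a ^ 2 < s ^ 2 := by nlinarith
      have hrp : r p = s * r m := (div_mul_cancel₀ (r p) (hr0 m).ne').symm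
      have habs : ‖(a : ℂ)‖ = a := by
        rw [Complex.norm_of_nonneg (Real.sqrt_nonneg _)]
      set u := (a : ℂ) • f p + (1 : ℂ) • f m with hudef
      have hu : u ∈ {v : H | 0 < (B v v).re} := by
        show 0 < (B u u).re
        rw [hudef, htwo p m hpm, habs, hp, hm]
        simp only [norm_one]
        nlinarith
      obtain ⟨v', hv', hWv'⟩ := hbij.surjOn hu
      set w := ((a : ℂ) / μ p) • f p + (μ m)⁻¹ • f m with hwdef
      have hWw : W w = u := by
        rw [hwdef, hudef]
        simp only [map_add, map_smul, hW, smul_smul]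
        rw [div_mul_cancel₀ _ (hμ p), inv_mul_cancel₀ (hμ m)]
      have hv'w : v' = w := hinj (hWv'.trans hWw.symm)
      rw [hv'w] at hv'
      have hv'' : 0 < (B w w).re := hv'
      rw [hwdef, htwo p m hpm, hp, hm] at hv''
      have habsd : ‖(a : ℂ) / μ p‖ = a / r p := by
        rw [norm_div, habs]
      have habsi : ‖(μ m)⁻¹‖ = (r m)⁻¹ := by
        rw [norm_inv]
      rw [habsd, habsi] at hv''
      have hd : (a / r p) ^ 2 = a ^ 2 / (r p) ^ 2 := by ring
      have hi : ((r m)⁻¹) ^ 2 = 1 / (r m) ^ 2 := by ring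
      rw [hd, hi] at hv''
      have hrp2 : (r p) ^ 2 = s ^ 2 * (r m) ^ 2 := by rw [hrp]; ring
      rw [hrp2] at hv''
      have hrm2 : (0:ℝ) < (r m) ^ 2 := pow_pos (hr0 m) 2
      have hs2 : (0:ℝ) < s ^ 2 := pow_pos (lt_trans one_pos hs) 2
      have hpos : (0:ℝ) < s ^ 2 * r m ^ 2 := mul_pos hs2 hrm2
      have hlt : a ^ 2 / (s ^ 2 * r m ^ 2) < 1 / r m ^ 2 := by
        rw [div_lt_div_iff₀ hpos hrm2]
        nlinarith [mul_lt_mul_of_pos_right has hrm2]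
      linarith [hv'']
    linarith
  obtain ⟨p0, hp0⟩ := hplus
  obtain ⟨m0, hm0⟩ := hminus
  refine ⟨r p0, hr0 p0, fun n => ?_⟩
  have hn : ‖μ n‖ = r n := rfl
  rcases hsign n with h | h
  · rw [hn, key n m0 h hm0, ← key p0 m0 hp0 hm0]
  · rw [hn, ← key p0 n hp0 h]
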